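/- The median rule with fixed phantoms is strategy-proof with respect to single-peaked preferences: for any profile of single-peaked preferences over ℝ with peaks p_1,...,p_a, any agent i, and any misreport p'_i, agent i weakly prefers med(p_1,...,p_a,γ) to med(p_1,...,p'_i,...,p_a,γ). -/
import Mathlib


def IsMedian (l : List ℝ) (m : ℝ) : Prop :=
  m ∈ l ∧ (l.length + 1) / 2 ≤ l.countP (fun b => decide (b ≤ m)) ∧
    (l.length + 1) / 2 ≤ l.countP (fun b => decide (m ≤ b))

lemma countP_update_ge {a : ℕ} (p : Fin a → ℝ) (i : Fin a) (p' : ℝ) (q : ℝ → Bool)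
    (hq : q (p i) = false) :
    (List.ofFn p).countP q ≤ (List.ofFn (Function.update p i p')).countP q := by
  rw [List.ofFn_eq_map, List.ofFn_eq_map, List.countP_map, List.countP_map]
  apply List.countP_mono_left
  intro j _ hj
  have hji : j ≠ i := by
    intro h; subst h
    simp only [Function.comp_apply, hq] at hj
    exact Bool.false_ne_true hj
  simpa [Function.comp_apply, Function.update_of_ne hji] using hj

lemma disj_count {l : List ℝ} {x y : ℝ} (hxy : y < x) :
    l.countP (fun b => decide (b ≤ y)) + l.countP (fun b => decide (x ≤ b)) ≤ l.length := by
  have h := List.length_eq_countP_add_countP (p := fun b => decide (b ≤ y)) (l := l)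
  have heq : (fun c => decide ¬(decide (c ≤ y) = true)) = fun b : ℝ => !decide (b ≤ y) := by
    funext b; rw [Bool.eq_iff_iff]; simp
  rw [heq] at h
  have h2 : l.countP (fun b => decide (x ≤ b)) ≤ l.countP (fun b => !decide (b ≤ y)) := by
    apply List.countP_mono_left
    intro b _ hb
    simp only [decide_eq_true_eq] at hb
    simp only [Bool.not_eq_true', decide_eq_false_iff_not, not_le]
    linarith
  omega

/-- The median rule with fixed phantoms is strategy-proof for single-peaked
preferences: agent `i` weakly prefers the truthful outcome `m` to the outcome
`m'` obtained by any misreport `p'`. -/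
theorem stmt3 (a : ℕ) (p : Fin a → ℝ) (γ : Fin (a + 1) → ℝ)
    (P : Fin a → ℝ → ℝ → Prop)
    (hsp : ∀ (i : Fin a) (x y : ℝ),
      ((x ≤ p i ∧ y < x) ∨ (p i ≤ x ∧ x < y)) → P i x y)
    (i : Fin a) (p' : ℝ) (m m' : ℝ)
    (hm : IsMedian (List.ofFn p ++ List.ofFn γ) m)
    (hm' : IsMedian (List.ofFn (Function.update p i p') ++ List.ofFn γ) m') :
    m' = m ∨ P i m m' := by
  rcases eq_or_ne m' m with h | h
  · exact Or.inl h
  right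
  set l := List.ofFn p ++ List.ofFn γ with hl
  set l' := List.ofFn (Function.update p i p') ++ List.ofFn γ with hl'
  have hlen : l.length = 2 * a + 1 := by simp [hl]; omega
  have hlen' : l'.length = 2 * a + 1 := by simp [hl']; omega
  rcases lt_or_gt_of_ne h with hlt | hgt
  · -- m' < m : show m ≤ p i
    have hpi : m ≤ p i := by
      by_contra hc
      push_neg at hc
      have c1 : a + 1 ≤ l.countP (fun b => decide (m ≤ b)) := by
        have := hm.2.2; omega
      have c2 : l.countP (fun b => decide (m ≤ b)) ≤ l'.countP (fun b => decide (m ≤ b)) := by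
        rw [hl, hl', List.countP_append, List.countP_append]
        have := countP_update_ge p i p' (fun b => decide (m ≤ b))
          (decide_eq_false (not_le.2 hc))
        omega
      have c3 : a + 1 ≤ l'.countP (fun b => decide (b ≤ m')) := by
        have := hm'.2.1; omega
      have c4 := disj_count (l := l') hlt
      omega
    exact hsp i m m' (Or.inl ⟨hpi, hlt⟩)
  · -- m < m' : show p i ≤ m
    have hpi : p i ≤ m := by
      by_contra hc
      push_neg at hc
      have c1 : a + 1 ≤ l.countP (fun b => decide (b ≤ m)) := by
        have := hm.2.1; omega
      have c2 : l.countP (fun b => decide (b ≤ m)) ≤ l'.countP (fun b => decide (b ≤ m)) := by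
        rw [hl, hl', List.countP_append, List.countP_append]
        have := countP_update_ge p i p' (fun b => decide (b ≤ m))
          (decide_eq_false (not_le.2 hc))
        omega
      have c3 : a + 1 ≤ l'.countP (fun b => decide (m' ≤ b)) := by
        have := hm'.2.2; omega
      have c4 := disj_count (l := l') hgt
      omega
    exact hsp i m m' (Or.inr ⟨hpi, hgt⟩)
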